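/- Let a > 2 and let {y_k, w_k} be the sequences generated by the GFDPG method with the choice t_k = (k + a)/a for all k ≥ 0 (this choice satisfies t_k² ≤ T_k). Then for any k ≥ 1 and any L′ > 0 satisfying the descent condition at y_k, min{ min_{1≤i≤k} ‖y_i − w_{i−1}‖, ‖p_{L′}(y_k) − y_k‖ } ≤ (a·√6/√(a − 2))·‖y_0 − y_*‖ / k^{1.5}. -/

import Mathlib

open scoped RealInnerProductSpace
open Set Filter

section Aux

variable {V : Type*} [NormedAddCommGroup V] [InnerProductSpace ℝ V]

private lemma gfdpg_aux_sq_smul (c : ℝ) (z : V) : ‖c • z‖ ^ 2 = c ^ 2 * ‖z‖ ^ 2 := by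
  rw [norm_smul]; simp [mul_pow, sq_abs]

private lemma gfdpg_aux_norm_diff_id (p w x : V) :
    ‖p - x‖ ^ 2 - ‖w - x‖ ^ 2 = -‖p - w‖ ^ 2 - 2 * ⟪x - p, p - w⟫ := by
  simp only [← real_inner_self_eq_norm_sq, inner_sub_left, inner_sub_right,
    real_inner_comm x w, real_inner_comm x p, real_inner_comm w p]
  ring

private lemma gfdpg_aux_combo_id (u w' p q : V) (A B : ℝ) :
    (A + B) * (A * (‖u - p‖ ^ 2 - ‖w' - p‖ ^ 2) + B * (‖u - q‖ ^ 2 - ‖w' - q‖ ^ 2))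
      = ‖(A + B) • u - A • p - B • q‖ ^ 2 - ‖(A + B) • w' - A • p - B • q‖ ^ 2 := by
  simp only [← real_inner_self_eq_norm_sq, inner_sub_left, inner_sub_right,
    real_inner_smul_left, real_inner_smul_right,
    real_inner_comm u w', real_inner_comm u p, real_inner_comm u q,
    real_inner_comm w' p, real_inner_comm w' q, real_inner_comm p q]
  ring

private lemma gfdpg_aux_smul_combo_sq (E D : V) (α β : ℝ) :
    ‖α • E + β • D‖ ^ 2 = (α + β) * (α * ‖E‖ ^ 2 + β * ‖D‖ ^ 2) - α * β * ‖E - D‖ ^ 2 := by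
  simp only [← real_inner_self_eq_norm_sq, inner_add_left, inner_add_right,
    inner_sub_left, inner_sub_right, real_inner_smul_left, real_inner_smul_right,
    real_inner_comm E D]
  ring

private lemma gfdpg_aux_pos_of_small (K C : ℝ) (hC : 0 ≤ C)
    (h : ∀ s ∈ Set.Ioc (0:ℝ) 1, 0 ≤ s * K + s ^ 2 * C) : 0 ≤ K := by
  by_contra hK
  push_neg at hK
  set s : ℝ := min 1 ((-K) / (2 * C + 1)) with hs
  have hs0 : 0 < s := lt_min zero_lt_one (div_pos (by linarith) (by linarith))
  have hs1 : s ≤ 1 := min_le_left _ _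
  have hsK : s ≤ (-K) / (2 * C + 1) := min_le_right _ _
  have := h s ⟨hs0, hs1⟩
  have h2 : s * (2 * C + 1) ≤ -K := by
    rw [← le_div_iff₀ (by positivity)]; exact hsK
  nlinarith [mul_pos hs0 hs0, sq_nonneg s]

private lemma gfdpg_aux_convex_grad_ineq [CompleteSpace V]
    (F : V → ℝ) (hF : ConvexOn ℝ Set.univ F) (F' : V → V)
    (hF' : ∀ y, HasGradientAt F (F' y) y) (w x : V) :
    F w + ⟪x - w, F' w⟫ ≤ F x := by
  set g : ℝ → ℝ := fun s => F (w + s • (x - w)) with hgdef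
  have hline : ∀ s : ℝ, HasDerivAt (fun s : ℝ => w + s • (x - w)) (x - w) s := by
    intro s
    simpa using ((hasDerivAt_id s).smul_const (x - w)).const_add w
  have hg : HasDerivAt g ⟪F' w, x - w⟫ 0 := by
    have h1 := (hF' (w + (0:ℝ) • (x - w))).hasFDerivAt.comp_hasDerivAt 0 (hline 0)
    simp [InnerProductSpace.toDual_apply_apply] at h1
    exact h1
  have hcg : ConvexOn ℝ Set.univ g := by
    have := hF.comp_affineMap (AffineMap.lineMap w x)
    rw [Set.preimage_univ] at this
    suffices heq : g = F ∘ AffineMap.lineMap w x by rw [heq]; exact this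
    funext s
    simp only [hgdef, Function.comp_apply, AffineMap.lineMap_apply_module]
    congr 1
    module
  have hsl : Tendsto (slope g 0) (nhdsWithin 0 (Set.Ioi 0)) (nhds ⟪F' w, x - w⟫) :=
    (hasDerivAt_iff_tendsto_slope.mp hg).mono_left
      (nhdsWithin_mono 0 (fun s hs => ne_of_gt hs))
  have hev : ∀ᶠ s in nhdsWithin 0 (Set.Ioi 0), slope g 0 s ≤ g 1 - g 0 := by
    filter_upwards [Ioc_mem_nhdsGT_of_mem (Set.left_mem_Ico.mpr zero_lt_one)] with s hs
    obtain ⟨hs0, hs1⟩ := hs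
    have hcvx := hcg.2 (Set.mem_univ (0:ℝ)) (Set.mem_univ (1:ℝ))
      (by linarith : (0:ℝ) ≤ 1 - s) (le_of_lt hs0) (by ring)
    simp only [smul_eq_mul, mul_zero, mul_one, zero_add] at hcvx
    rw [slope_def_field]
    have hgs : g s ≤ (1 - s) * g 0 + s * g 1 := by simpa using hcvx
    rw [sub_zero, div_le_iff₀ hs0]
    nlinarith [hgs]
  have hfin : ⟪F' w, x - w⟫ ≤ g 1 - g 0 := le_of_tendsto hsl hev
  have hg1 : g 1 = F x := by simp [hgdef]
  have hg0 : g 0 = F w := by simp [hgdef]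
  rw [hg1, hg0] at hfin
  rw [real_inner_comm] at hfin
  linarith

private lemma gfdpg_aux_prox_opt
    (F G : V → ℝ) (hG : ConvexOn ℝ Set.univ G) (F' : V → V)
    (L : ℝ) (hL : 0 < L) (w p : V)
    (hmin : IsMinOn (fun y => F w + ⟪y - w, F' w⟫ + L / 2 * ‖y - w‖^2 + G y) Set.univ p)
    (x : V) :
    0 ≤ ⟪x - p, F' w⟫ + L * ⟪x - p, p - w⟫ + G x - G p := by
  apply gfdpg_aux_pos_of_small _ (L / 2 * ‖x - p‖ ^ 2) (by positivity)
  intro s hs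
  obtain ⟨hs0, hs1⟩ := hs
  have hmem := hmin (Set.mem_univ (p + s • (x - p)))
  simp only [Set.mem_setOf_eq] at hmem
  have hGc : G (p + s • (x - p)) ≤ (1 - s) * G p + s * G x := by
    have hcx := hG.2 (Set.mem_univ p) (Set.mem_univ x) (by linarith : (0:ℝ) ≤ 1 - s)
      (le_of_lt hs0) (by ring)
    have h3 : (1 - s) • p + s • x = p + s • (x - p) := by module
    rw [h3] at hcx
    simpa [smul_eq_mul] using hcx
  have hinner : ⟪p + s • (x - p) - w, F' w⟫ = ⟪p - w, F' w⟫ + s * ⟪x - p, F' w⟫ := by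
    have h3 : p + s • (x - p) - w = (p - w) + s • (x - p) := by module
    rw [h3, inner_add_left, real_inner_smul_left]
  have hnorm : ‖p + s • (x - p) - w‖ ^ 2
      = ‖p - w‖ ^ 2 + 2 * s * ⟪p - w, x - p⟫ + s ^ 2 * ‖x - p‖ ^ 2 := by
    have h4 : p + s • (x - p) - w = (p - w) + s • (x - p) := by module
    rw [h4, norm_add_sq_real, real_inner_smul_right, norm_smul]
    simp [mul_pow, sq_abs]
    ring
  have hQ : F w + ⟪p - w, F' w⟫ + L / 2 * ‖p - w‖^2 + G p ≤
      F w + (⟪p - w, F' w⟫ + s * ⟪x - p, F' w⟫)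
        + L / 2 * (‖p - w‖ ^ 2 + 2 * s * ⟪p - w, x - p⟫ + s ^ 2 * ‖x - p‖ ^ 2)
        + ((1 - s) * G p + s * G x) := by
    calc F w + ⟪p - w, F' w⟫ + L / 2 * ‖p - w‖^2 + G p
        ≤ F w + ⟪p + s • (x - p) - w, F' w⟫ + L / 2 * ‖p + s • (x - p) - w‖^2
            + G (p + s • (x - p)) := hmem
      _ ≤ _ := by rw [hinner, hnorm]; linarith [hGc]
  have hcomm : ⟪p - w, x - p⟫ = ⟪x - p, p - w⟫ := real_inner_comm _ _
  rw [hcomm] at hQ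
  nlinarith [hQ]

/-- Lemma A : the fundamental prox-grad inequality under the descent condition. -/
private lemma gfdpg_aux_keyA [CompleteSpace V]
    (F G : V → ℝ) (hF : ConvexOn ℝ Set.univ F) (hG : ConvexOn ℝ Set.univ G)
    (F' : V → V) (hF' : ∀ y, HasGradientAt F (F' y) y)
    (L : ℝ) (hL : 0 < L) (w' p : V)
    (hmin : IsMinOn (fun y => F w' + ⟪y - w', F' w'⟫ + L / 2 * ‖y - w'‖^2 + G y) Set.univ p)
    (hd : F p + G p ≤ F w' + ⟪p - w', F' w'⟫ + L / 2 * ‖p - w'‖^2 + G p)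
    (x : V) :
    L * (‖p - x‖ ^ 2 - ‖w' - x‖ ^ 2) ≤ 2 * ((F x + G x) - (F p + G p)) := by
  have hco := gfdpg_aux_convex_grad_ineq F hF F' hF' w' x
  have hop := gfdpg_aux_prox_opt F G hG F' L hL w' p hmin x
  have hsplit : ⟪x - p, F' w'⟫ = ⟪x - w', F' w'⟫ - ⟪p - w', F' w'⟫ := by
    have h3 : x - p = (x - w') - (p - w') := by module
    rw [h3, inner_sub_left]
  rw [hsplit] at hop
  rw [gfdpg_aux_norm_diff_id]
  nlinarith [hop, hco, hd, hL.le]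

end Aux
set_option maxHeartbeats 2000000 in
theorem gfdpg_prox_grad_norm_rate
    {V : Type*} [NormedAddCommGroup V] [InnerProductSpace ℝ V] [FiniteDimensional ℝ V]
    (F G : V → ℝ) (LF : ℝ)
    (hF : ConvexOn ℝ Set.univ F) (hG : ConvexOn ℝ Set.univ G)
    (F' : V → V) (hF' : ∀ y, HasGradientAt F (F' y) y)
    (hLip : ∀ y w : V, ‖F' y - F' w‖ ≤ LF * ‖y - w‖)
    -- q̃ := F + G attains its minimum at y_*
    (ystar : V) (hystar : ∀ y, F ystar + G ystar ≤ F y + G y)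
    -- p_L(w) : the unique minimizer over y of Q_L(y, w)
    (P : ℝ → V → V)
    (hP : ∀ L, 0 < L → ∀ w, IsMinOn
      (fun y => F w + ⟪y - w, F' w⟫ + L / 2 * ‖y - w‖^2 + G y) Set.univ (P L w))
    -- the GFDPG method
    (y w : ℕ → V) (t T Lk : ℕ → ℝ)
    (hw0 : w 0 = y 0) (hL0 : 0 < Lk 0)
    (ht0 : t 0 = T 0) (ht0pos : 0 < t 0) (ht0le : t 0 ≤ 1)
    (hT : ∀ k : ℕ, T k = ∑ i ∈ Finset.range (k+1), t i)
    (hLmono : ∀ k : ℕ, Lk k ≤ Lk (k+1))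
    (hdesc : ∀ k : ℕ,
      F (P (Lk (k+1)) (w k)) + G (P (Lk (k+1)) (w k)) ≤
        F (w k) + ⟪P (Lk (k+1)) (w k) - w k, F' (w k)⟫
          + Lk (k+1) / 2 * ‖P (Lk (k+1)) (w k) - w k‖^2 + G (P (Lk (k+1)) (w k)))
    (hy : ∀ k : ℕ, y (k+1) = P (Lk (k+1)) (w k))
    (htpos : ∀ k : ℕ, 0 < t (k+1)) (htsq : ∀ k : ℕ, t (k+1) ^ 2 ≤ T (k+1))
    (hw : ∀ k : ℕ, w (k+1) = y (k+1)
      + (((T k - t k) * t (k+1)) / (t k * T (k+1))) • (y (k+1) - y k)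
      + (((t k ^ 2 - T k) * t (k+1)) / (t k * T (k+1))) • (y (k+1) - w k))
    -- the choice t_k = (k + a)/a with a > 2
    (a : ℝ) (ha : 2 < a)
    (htchoice : ∀ k : ℕ, t k = ((k : ℝ) + a) / a)
    (k : ℕ) (hk : 1 ≤ k)
    -- L′ > 0 satisfying the descent condition at y_k
    (L' : ℝ) (hL' : 0 < L')
    (hdesc' : F (P L' (y k)) + G (P L' (y k)) ≤
      F (y k) + ⟪P L' (y k) - y k, F' (y k)⟫
        + L' / 2 * ‖P L' (y k) - y k‖^2 + G (P L' (y k))) :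
    min ((Finset.Icc 1 k).inf' (Finset.nonempty_Icc.mpr hk) (fun i => ‖y i - w (i-1)‖))
        ‖P L' (y k) - y k‖
      ≤ (a * Real.sqrt 6 / Real.sqrt (a - 2)) * ‖y 0 - ystar‖ / (k : ℝ) ^ (1.5 : ℝ) := by
  have ha0 : (0:ℝ) < a := by linarith
  have htv : ∀ m : ℕ, 0 < t m := by
    intro m; rw [htchoice]; positivity
  have hTrec : ∀ m : ℕ, T (m+1) = T m + t (m+1) := by
    intro m; rw [hT, hT, Finset.sum_range_succ]
  have hT0 : T 0 = t 0 := by rw [hT]; simp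
  have hTval : ∀ m : ℕ, T m = ((m:ℝ)+1) * ((m:ℝ)+2*a) / (2*a) := by
    intro m; induction m with
    | zero => rw [hT0, htchoice]; push_cast; field_simp; ring
    | succ n ih =>
      rw [hTrec, ih, htchoice]; push_cast; field_simp; ring
  have hTpos : ∀ m : ℕ, 0 < T m := by
    intro m; rw [hTval]; positivity
  have hTtnn : ∀ m : ℕ, 0 ≤ T m - t m := by
    intro m
    have hm : (0:ℝ) ≤ (m:ℝ) := Nat.cast_nonneg m
    have key : T m - t m = (m:ℝ) * ((m:ℝ) + 2*a - 1) / (2*a) := by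
      rw [hTval, htchoice]; field_simp; ring
    rw [key]
    exact div_nonneg (mul_nonneg hm (by linarith)) (by linarith)
  have hTt2 : ∀ m : ℕ, T m - (t m)^2 = (m:ℝ) * ((a-2) * (m:ℝ) + (2*a^2 - 3*a)) / (2*a^2) := by
    intro m; rw [hTval, htchoice]; field_simp; ring
  have hTt2nn : ∀ m : ℕ, 0 ≤ T m - (t m)^2 := by
    intro m
    rw [hTt2]
    have hm : (0:ℝ) ≤ (m:ℝ) := Nat.cast_nonneg m
    have : 0 ≤ (a-2) * (m:ℝ) + (2*a^2 - 3*a) := by nlinarith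
    positivity
  have hLpos : ∀ m : ℕ, 0 < Lk m := by
    intro m; induction m with
    | zero => exact hL0
    | succ n ih => exact lt_of_lt_of_le ih (hLmono n)
  -- function-value gaps
    -- v m = q̃(y m) - q̃(y⋆)
  set v : ℕ → ℝ := fun m => F (y m) + G (y m) - (F ystar + G ystar) with hvdef
  have hvnn : ∀ m : ℕ, 0 ≤ v m := by
    intro m; simp only [hvdef]; linarith [hystar (y m)]
  set Z : ℕ → V := fun m => T m • w m - (T m - t m) • y m - t m • ystar with hZdef
  set E : ℕ → V := fun m => T m • y (m+1) - (T m - t m) • y m - t m • ystar with hEdef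
  set R : ℕ → ℝ := fun m => ‖y (m+1) - w m‖ with hRdef
  -- Lemma A at each step
  have hkey : ∀ (m : ℕ) (x : V),
      Lk (m+1) * (‖y (m+1) - x‖ ^ 2 - ‖w m - x‖ ^ 2)
        ≤ 2 * ((F x + G x) - (F (y (m+1)) + G (y (m+1)))) := by
    intro m x
    rw [hy m]
    exact gfdpg_aux_keyA F G hF hG F' hF' (Lk (m+1)) (hLpos (m+1)) (w m) _
      (hP _ (hLpos (m+1)) (w m)) (hdesc m) x
  -- KEY1
  have hE_ineq : ∀ m : ℕ,
      Lk (m+1) * ‖E m‖^2 + 2*(T m)^2 * v (m+1)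
        ≤ Lk (m+1) * ‖Z m‖^2 + 2*(T m)*(T m - t m) * v m := by
    intro m
    have hv1 : F (y m) + G (y m) - (F (y (m+1)) + G (y (m+1))) = v m - v (m+1) := by
      simp only [hvdef]; ring
    have hv2 : F ystar + G ystar - (F (y (m+1)) + G (y (m+1))) = 0 - v (m+1) := by
      simp only [hvdef]; ring
    have j1 := hkey m (y m)
    have j2 := hkey m ystar
    rw [hv1] at j1
    rw [hv2] at j2
    have hcombo := gfdpg_aux_combo_id (y (m+1)) (w m) (y m) ystar (T m - t m) (t m)
    have hst : (T m - t m) + t m = T m := by ring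
    rw [hst] at hcombo
    have c1 := mul_le_mul_of_nonneg_left j1 (hTtnn m)
    have c2 := mul_le_mul_of_nonneg_left j2 (htv m).le
    have c4 := mul_le_mul_of_nonneg_left (add_le_add c1 c2) (hTpos m).le
    have lhs_eq : T m * ((T m - t m) * (Lk (m+1) * (‖y (m+1) - y m‖ ^ 2 - ‖w m - y m‖ ^ 2))
        + t m * (Lk (m+1) * (‖y (m+1) - ystar‖ ^ 2 - ‖w m - ystar‖ ^ 2)))
        = Lk (m+1) * (‖E m‖ ^ 2 - ‖Z m‖ ^ 2) := by
      calc T m * ((T m - t m) * (Lk (m+1) * (‖y (m+1) - y m‖ ^ 2 - ‖w m - y m‖ ^ 2))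
          + t m * (Lk (m+1) * (‖y (m+1) - ystar‖ ^ 2 - ‖w m - ystar‖ ^ 2)))
          = Lk (m+1) * (T m * ((T m - t m) * (‖y (m+1) - y m‖ ^ 2 - ‖w m - y m‖ ^ 2)
            + t m * (‖y (m+1) - ystar‖ ^ 2 - ‖w m - ystar‖ ^ 2))) := by ring
        _ = Lk (m+1) * (‖E m‖ ^ 2 - ‖Z m‖ ^ 2) := by rw [hcombo]
    rw [lhs_eq] at c4
    nlinarith [c4]
  -- vector recursion identity
  have hVID : ∀ m : ℕ,
      (t m * T m / t (m+1)) • Z (m+1) = ((t m)^2) • E m + (T m - (t m)^2) • Z m := by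
    intro m
    have htm := (htv m).ne'
    have htm1 := (htv (m+1)).ne'
    have htm1' : t (1+m) ≠ 0 := by rw [Nat.add_comm]; exact htm1
    have hTm := (hTpos m).ne'
    have hTadd : T m + t (m+1) ≠ 0 := by
      rw [← hTrec m]; exact (hTpos (m+1)).ne'
    have hTadd' : T m + t (1+m) ≠ 0 := by rw [Nat.add_comm]; exact hTadd
    simp only [hZdef, hEdef]
    rw [hw m, hTrec m]
    match_scalars <;> field_simp <;> ring
  -- squared identity (KEY2)
  have hsq : ∀ m : ℕ,
      (t m)^2 * (T m)^2 * ‖Z (m+1)‖^2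
        = (t (m+1))^2 * ((T m) * ((t m)^2 * ‖E m‖^2 + (T m - (t m)^2) * ‖Z m‖^2)
            - (t m)^2 * (T m - (t m)^2) * (T m)^2 * (R m)^2) := by
    intro m
    have htm := (htv m).ne'
    have htm1 := (htv (m+1)).ne'
    have hTm := (hTpos m).ne'
    have h1 : ‖(t m * T m / t (m+1)) • Z (m+1)‖^2
        = ‖((t m)^2) • E m + (T m - (t m)^2) • Z m‖^2 := by rw [hVID m]
    rw [gfdpg_aux_sq_smul, gfdpg_aux_smul_combo_sq] at h1
    have h2 : E m - Z m = T m • (y (m+1) - w m) := by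
      simp only [hEdef, hZdef]; module
    rw [h2, gfdpg_aux_sq_smul] at h1
    have h3 : ((t m)^2 + (T m - (t m)^2)) = T m := by ring
    rw [h3] at h1
    have hR : ‖y (m+1) - w m‖ ^ 2 = (R m)^2 := by simp only [hRdef]
    rw [hR] at h1
    field_simp at h1
    linear_combination (T m) * h1
  -- one-step potential inequality
  have hPSI : ∀ m : ℕ,
      ‖Z (m+1)‖^2 / (t (m+1))^2 + 2*(T m)/(Lk (m+1)) * v (m+1) + (T m - (t m)^2) * (R m)^2
        ≤ ‖Z m‖^2 / (t m)^2 + 2*(T m - t m)/(Lk (m+1)) * v m := by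
    intro m
    have htm := htv m
    have htm1 := htv (m+1)
    have hTm := hTpos m
    have hLm := hLpos (m+1)
    have c := mul_le_mul_of_nonneg_left (hE_ineq m)
      (show (0:ℝ) ≤ (t (m+1))^2 * (T m) by positivity)
    have hdiff : (‖Z m‖^2 / (t m)^2 + 2*(T m - t m)/(Lk (m+1)) * v m)
        - (‖Z (m+1)‖^2 / (t (m+1))^2 + 2*(T m)/(Lk (m+1)) * v (m+1) + (T m - (t m)^2) * (R m)^2)
        = ((Lk (m+1) * ((t (m+1))^2*(T m)^2) * ‖Z m‖^2
            + 2*(T m - t m)*(T m)^2*(t m)^2*(t (m+1))^2 * v m)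
          - (Lk (m+1) * ((t m)^2 * (T m)^2) * ‖Z (m+1)‖^2
            + 2*(T m)^3*(t m)^2*(t (m+1))^2 * v (m+1)
            + Lk (m+1)*(t m)^2*(t (m+1))^2*(T m)^2*(T m - (t m)^2)*(R m)^2))
          / (Lk (m+1) * ((t m)^2 * ((t (m+1))^2 * (T m)^2))) := by
      field_simp
    rw [← sub_nonneg, hdiff]
    apply div_nonneg _ (by positivity)
    nlinarith [hsq m, c]
  -- telescoping
  have hC : ∀ n : ℕ,
      ‖Z n‖^2 / (t n)^2 + 2*(T n - t n)/(Lk n) * v n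
        + ∑ m ∈ Finset.range n, (T m - (t m)^2) * (R m)^2 ≤ ‖y 0 - ystar‖^2 := by
    intro n
    induction n with
    | zero =>
      have hZ0 : Z 0 = t 0 • (y 0 - ystar) := by
        simp only [hZdef]; rw [hw0, ht0]; module
      rw [hZ0, gfdpg_aux_sq_smul, ← ht0]
      simp only [Finset.sum_range_zero, sub_self, mul_zero, zero_div, zero_mul, add_zero]
      rw [mul_comm, mul_div_assoc, div_self (pow_ne_zero 2 (htv 0).ne'), mul_one]
    | succ n ih =>
      have psi := hPSI n
      have hmono : 2*(T n - t n)/(Lk (n+1)) * v n ≤ 2*(T n - t n)/(Lk n) * v n := by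
        apply mul_le_mul_of_nonneg_right _ (hvnn n)
        apply div_le_div_of_nonneg_left (by linarith [hTtnn n]) (hLpos n) (hLmono n)
      rw [Finset.sum_range_succ]
      have hTT : T (n+1) - t (n+1) = T n := by rw [hTrec]; ring
      rw [hTT]
      linarith [psi, ih, hmono]
  -- final assembly
  set d0 := ‖y 0 - ystar‖ with hd0
  have hd0nn : 0 ≤ d0 := norm_nonneg _
  set M := min ((Finset.Icc 1 k).inf' (Finset.nonempty_Icc.mpr hk) (fun i => ‖y i - w (i-1)‖))
      ‖P L' (y k) - y k‖ with hMdef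
  have hMnn : 0 ≤ M :=
    le_min (Finset.le_inf' _ _ (fun i _ => norm_nonneg _)) (norm_nonneg _)
  have hMR : ∀ m : ℕ, m ∈ Finset.range k → M ≤ R m := by
    intro m hm
    have h1 : m + 1 ∈ Finset.Icc 1 k := by
      rw [Finset.mem_Icc]; rw [Finset.mem_range] at hm; omega
    have h2 := Finset.inf'_le (b := m+1) (fun i => ‖y i - w (i-1)‖) h1
    calc M ≤ _ := min_le_left _ _
      _ ≤ ‖y (m+1) - w ((m+1)-1)‖ := h2
      _ = R m := by simp only [hRdef, Nat.add_sub_cancel]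
  have hsum_bound : ∑ m ∈ Finset.range k, (T m - (t m)^2) * (R m)^2 ≤ d0^2 := by
    have h := hC k
    have h1 : 0 ≤ ‖Z k‖^2/(t k)^2 := by positivity
    have h2 : 0 ≤ 2*(T k - t k)/(Lk k) * v k :=
      mul_nonneg (div_nonneg (by linarith [hTtnn k]) (hLpos k).le) (hvnn k)
    linarith
  have hMsum : (∑ m ∈ Finset.range k, (T m - (t m)^2)) * M^2 ≤ d0^2 := by
    rw [Finset.sum_mul]
    refine le_trans (Finset.sum_le_sum ?_) hsum_bound
    intro m hm
    exact mul_le_mul_of_nonneg_left (pow_le_pow_left₀ hMnn (hMR m hm) 2) (hTt2nn m)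
  have ha2 : (0:ℝ) < a - 2 := by linarith
  have hsqa2 : (0:ℝ) < Real.sqrt (a-2) := Real.sqrt_pos.mpr ha2
  have hs6 : (2:ℝ) ≤ Real.sqrt 6 := by
    rw [show (2:ℝ) = Real.sqrt 4 by
      rw [show (4:ℝ) = 2^2 by norm_num, Real.sqrt_sq (by norm_num : (0:ℝ) ≤ 2)]]
    exact Real.sqrt_le_sqrt (by norm_num)
  rcases eq_or_lt_of_le hk with hk1 | hk2
  · -- k = 1
    have hkk : k = 1 := hk1.symm
    subst hkk
    have hy1 := hkey 0 ystar
    rw [hw0] at hy1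
    have h5 := hystar (y 1)
    have hL1 := hLpos 1
    have hsq1 : ‖y 1 - ystar‖^2 ≤ d0^2 := by nlinarith [hy1, h5, hL1]
    have hle : ‖y 1 - ystar‖ ≤ d0 := le_of_pow_le_pow_left₀ two_ne_zero hd0nn hsq1
    have htri : ‖y 1 - w 0‖ ≤ ‖y 1 - ystar‖ + d0 := by
      rw [hw0]
      have h6 : y 1 - y 0 = (y 1 - ystar) - (y 0 - ystar) := by module
      rw [h6]; exact norm_sub_le _ _
    have hM1 : M ≤ ‖y 1 - w 0‖ := by
      have h1 : (1:ℕ) ∈ Finset.Icc 1 1 := by simp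
      have h2 := Finset.inf'_le (b := 1) (fun i => ‖y i - w (i-1)‖) h1
      exact le_trans (min_le_left _ _) h2
    have hM2d0 : M ≤ 2 * d0 := by linarith
    have hsa : Real.sqrt (a-2) ≤ a := by
      have h7 : Real.sqrt (a-2) ≤ Real.sqrt (a^2) :=
        Real.sqrt_le_sqrt (by nlinarith [sq_nonneg (a-1)])
      rwa [Real.sqrt_sq ha0.le] at h7
    have hC2 : (2:ℝ) ≤ a * Real.sqrt 6 / Real.sqrt (a-2) := by
      rw [le_div_iff₀ hsqa2]
      nlinarith
    have hrhs : (2:ℝ) * d0 ≤ a * Real.sqrt 6 / Real.sqrt (a-2) * d0 :=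
      mul_le_mul_of_nonneg_right hC2 hd0nn
    have hcast : ((1:ℕ):ℝ) ^ (1.5:ℝ) = 1 := by
      rw [Nat.cast_one, Real.one_rpow]
    rw [hcast, div_one]
    linarith
  · -- 2 ≤ k
    have hk2n : 2 ≤ k := hk2
    have hk2' : (2:ℝ) ≤ (k:ℝ) := by exact_mod_cast hk2n
    have hk0 : (0:ℝ) < (k:ℝ) := by linarith
    have ha' : a ≠ 0 := ha0.ne'
    have hsum_lb : ∀ n : ℕ, 2 ≤ n →
        (a-2) * (n:ℝ)^3 / (6*a^2) ≤ ∑ m ∈ Finset.range n, (T m - (t m)^2) := by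
      intro n hn
      induction n, hn using Nat.le_induction with
      | base =>
        rw [Finset.sum_range_succ, Finset.sum_range_one, hTt2 0, hTt2 1]
        push_cast
        norm_num
        rw [div_le_div_iff₀ (by positivity) (by positivity)]
        nlinarith [mul_nonneg (mul_nonneg ha0.le ha0.le) (sq_nonneg (6*a-7)), mul_pos ha0 ha0]
      | succ n hn ih =>
        rw [Finset.sum_range_succ, hTt2 n]
        have hn2 : (2:ℝ) ≤ (n:ℝ) := by exact_mod_cast hn
        push_cast
        have hkey2 : (a-2) * ((n:ℝ)+1)^3 / (6*a^2) - (a-2) * (n:ℝ)^3 / (6*a^2)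
            ≤ (n:ℝ) * ((a-2) * (n:ℝ) + (2*a^2 - 3*a)) / (2*a^2) := by
          rw [div_sub_div_same, div_le_div_iff₀ (by positivity) (by positivity)]
          nlinarith [sq_nonneg (a-1), hn2, mul_nonneg (sub_nonneg.mpr hn2) (sq_nonneg (a-1))]
        linarith [ih]
    have hlb := hsum_lb k hk2n
    have hfinal : ((a-2) * (k:ℝ)^3 / (6*a^2)) * M^2 ≤ d0^2 :=
      le_trans (mul_le_mul_of_nonneg_right hlb (sq_nonneg M)) hMsum
    have hc2 : ((k:ℝ) ^ (1.5:ℝ))^2 = (k:ℝ)^3 := by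
      rw [← Real.rpow_natCast ((k:ℝ) ^ (1.5:ℝ)) 2, ← Real.rpow_mul hk0.le]
      norm_num
    have h6sq : Real.sqrt 6 ^ 2 = 6 := Real.sq_sqrt (by norm_num)
    have ha2sq : Real.sqrt (a-2) ^ 2 = a - 2 := Real.sq_sqrt ha2.le
    have hM2' : M^2 * ((a-2)*(k:ℝ)^3) ≤ 6*a^2*d0^2 := by
      have h7 := mul_le_mul_of_nonneg_right hfinal (show (0:ℝ) ≤ 6*a^2 by positivity)
      have h8 : ((a-2) * (k:ℝ)^3 / (6*a^2)) * M^2 * (6*a^2) = M^2 * ((a-2)*(k:ℝ)^3) := by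
        field_simp
      rw [h8] at h7
      nlinarith [h7]
    have hrexp : (a * Real.sqrt 6 / Real.sqrt (a-2) * d0 / (k:ℝ) ^ (1.5:ℝ))^2
        = a^2 * Real.sqrt 6 ^ 2 / Real.sqrt (a-2) ^ 2 * d0^2 / ((k:ℝ) ^ (1.5:ℝ))^2 := by
      ring
    have hM2 : M^2 ≤ (a * Real.sqrt 6 / Real.sqrt (a-2) * d0 / (k:ℝ) ^ (1.5:ℝ))^2 := by
      rw [hrexp, h6sq, ha2sq, hc2]
      have h9 : a^2 * 6 / (a-2) * d0^2 / (k:ℝ)^3 = 6*a^2*d0^2 / (a-2) / (k:ℝ)^3 := by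
        ring
      rw [h9, le_div_iff₀ (by positivity : (0:ℝ) < (k:ℝ)^3), le_div_iff₀ ha2]
      nlinarith [hM2']
    exact le_of_pow_le_pow_left₀ two_ne_zero (by positivity) hM2
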